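/- Let b > 0, q ∈ ℝ, and Z ~ Laplace(0,b). If f : ℝ → ℝ is twice continuously differentiable, and f, f', f'' all have at most polynomial growth, then E[f(q+Z) − b²·f''(q+Z)] = f(q). -/

import Mathlib

open MeasureTheory Real

/-- Density of the Laplace(0,b) distribution. -/
noncomputable def laplacePDF (b x : ℝ) : ℝ := (1 / (2 * b)) * Real.exp (-|x| / b)

/-- A function has at most polynomial growth. -/
def PolyGrowth (f : ℝ → ℝ) : Prop :=
  ∃ C n, ∀ x : ℝ, |f x| ≤ C * (1 + |x|) ^ (n : ℕ)

open Filter Set Topology in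
lemma pg_tendsto {c : ℝ} (hc : 0 < c) {g : ℝ → ℝ} (hg : PolyGrowth g) (q : ℝ) :
    Tendsto (fun z : ℝ => g (q + z) * Real.exp (-(c * z))) atTop (𝓝 0) := by
  obtain ⟨C, n, hC⟩ := hg
  have T : Tendsto (fun z : ℝ => C * ((1 + |q| + z) ^ (n : ℕ) * Real.exp (-(c * z))))
      atTop (𝓝 0) := by
    have T0 := (tendsto_rpow_mul_exp_neg_mul_atTop_nhds_zero (n : ℝ) c hc).comp
      (tendsto_atTop_add_const_left atTop (1 + |q|) tendsto_id)
    have T1 := (T0.mul_const (Real.exp (c * (1 + |q|)))).const_mul C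
    rw [zero_mul, mul_zero] at T1
    refine T1.congr (fun z => ?_)
    simp only [Function.comp, id_eq, Real.rpow_natCast]
    ring_nf
    rw [mul_assoc C, ← Real.exp_add]
    ring_nf
  apply squeeze_zero_norm' _ T
  filter_upwards [eventually_ge_atTop (0:ℝ)] with z hz
  have h1 : |g (q + z)| ≤ C * (1 + |q| + z) ^ (n : ℕ) := by
    refine (hC (q + z)).trans ?_
    have hb : (0:ℝ) ≤ C := by
      have := (abs_nonneg (g 0)).trans (hC 0)
      simpa using this
    apply mul_le_mul_of_nonneg_left _ hb
    apply pow_le_pow_left₀ (by positivity)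
    have := abs_add_le q z
    rw [abs_of_nonneg hz] at this
    linarith
  rw [Real.norm_eq_abs, abs_mul, Real.abs_exp]
  calc |g (q + z)| * Real.exp (-(c * z))
      ≤ (C * (1 + |q| + z) ^ (n:ℕ)) * Real.exp (-(c * z)) := by
        apply mul_le_mul_of_nonneg_right h1 (Real.exp_nonneg _)
    _ = C * ((1 + |q| + z) ^ (n:ℕ) * Real.exp (-(c * z))) := by ring

open Filter Set Topology in
lemma pg_integrableOn {c : ℝ} (hc : 0 < c) {g : ℝ → ℝ} (hgc : Continuous g)
    (hg : PolyGrowth g) (q : ℝ) :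
    IntegrableOn (fun z : ℝ => g (q + z) * Real.exp (-(c * z))) (Ici (0:ℝ)) := by
  rw [integrableOn_Ici_iff_integrableOn_Ioi]
  apply integrable_of_isBigO_exp_neg (half_pos hc)
  · exact ((hgc.comp (continuous_const.add continuous_id)).mul
      (Real.continuous_exp.comp (continuous_const.mul continuous_id).neg)).continuousOn
  · have hT := pg_tendsto (half_pos hc) hg q
    rw [NormedAddCommGroup.tendsto_nhds_zero] at hT
    apply Asymptotics.IsBigO.of_bound 1
    filter_upwards [hT 1 one_pos] with z hz
    have h2 : Real.exp (-(c * z)) = Real.exp (-(c/2 * z)) * Real.exp (-(c/2 * z)) := by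
      rw [← Real.exp_add]; ring_nf
    rw [Real.norm_eq_abs, abs_mul, Real.abs_exp, h2, one_mul, Real.norm_eq_abs, Real.abs_exp,
      neg_mul, ← mul_assoc]
    rw [Real.norm_eq_abs, abs_mul, Real.abs_exp] at hz
    calc |g (q + z)| * Real.exp (-(c / 2 * z)) * Real.exp (-(c / 2 * z))
        ≤ 1 * Real.exp (-(c / 2 * z)) :=
          mul_le_mul_of_nonneg_right hz.le (Real.exp_nonneg _)
      _ = Real.exp (-(c / 2 * z)) := one_mul _

lemma pg_neg {g : ℝ → ℝ} (hg : PolyGrowth g) : PolyGrowth (fun x => g (-x)) := by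
  obtain ⟨C, n, hC⟩ := hg
  exact ⟨C, n, fun x => by simpa using hC (-x)⟩

lemma pg_combo (a b : ℝ) {g h : ℝ → ℝ} (hg : PolyGrowth g) (hh : PolyGrowth h) :
    PolyGrowth (fun x => a * g x + b * h x) := by
  obtain ⟨C1, n1, hC1⟩ := hg
  obtain ⟨C2, n2, hC2⟩ := hh
  refine ⟨|a| * C1 + |b| * C2, max n1 n2, fun x => ?_⟩
  have hbase : (1:ℝ) ≤ 1 + |x| := by linarith [abs_nonneg x]
  have h1 : (1 + |x|) ^ n1 ≤ (1 + |x|) ^ (max n1 n2) :=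
    pow_le_pow_right₀ hbase (le_max_left _ _)
  have h2 : (1 + |x|) ^ n2 ≤ (1 + |x|) ^ (max n1 n2) :=
    pow_le_pow_right₀ hbase (le_max_right _ _)
  have hC1' : (0:ℝ) ≤ C1 := by have := (abs_nonneg (g 0)).trans (hC1 0); simpa using this
  have hC2' : (0:ℝ) ≤ C2 := by have := (abs_nonneg (h 0)).trans (hC2 0); simpa using this
  calc |a * g x + b * h x| ≤ |a| * |g x| + |b| * |h x| := by
        refine (abs_add_le _ _).trans ?_; rw [abs_mul, abs_mul]
    _ ≤ |a| * (C1 * (1 + |x|) ^ (max n1 n2)) + |b| * (C2 * (1 + |x|) ^ (max n1 n2)) := by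
        gcongr
        · exact (hC1 x).trans (by nlinarith [abs_nonneg a])
        · exact (hC2 x).trans (by nlinarith [abs_nonneg b])
    _ = (|a| * C1 + |b| * C2) * (1 + |x|) ^ (max n1 n2) := by ring

open Filter Set Topology in
/-- If `f` is twice continuously differentiable with polynomially growing `f`, `f'`, `f''`,
then `f(q+Z) - b² f''(q+Z)` is an unbiased estimator for `f(q)` under Laplace(0,b) noise. -/
theorem unbiased_estimator_laplace (b : ℝ) (hb : 0 < b) (q : ℝ) (f : ℝ → ℝ)
    (hf : ContDiff ℝ 2 f)
    (hg0 : PolyGrowth f) (hg1 : PolyGrowth (deriv f)) (hg2 : PolyGrowth (deriv (deriv f))) :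
    ∫ z : ℝ, (f (q + z) - b ^ 2 * deriv (deriv f) (q + z)) * laplacePDF b z = f q := by
  have hb0 : b ≠ 0 := hb.ne'
  have hcb : (0:ℝ) < 1/b := by positivity
  -- smoothness
  have h2 : ContDiff ℝ ((1:ℕ) + 1) f := by exact_mod_cast hf
  obtain ⟨hd1, -, hc1⟩ := contDiff_succ_iff_deriv.mp h2
  have h1 : ContDiff ℝ ((0:ℕ) + 1) (deriv f) := by exact_mod_cast hc1
  obtain ⟨hd2, -, hc0⟩ := contDiff_succ_iff_deriv.mp h1
  have hcont2 : Continuous (deriv (deriv f)) := hc0.continuous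
  -- the combined function g = f - b² f''
  set g : ℝ → ℝ := fun x => f x - b ^ 2 * deriv (deriv f) x with hgdef
  have hgc : Continuous g := hf.continuous.sub (continuous_const.mul hcont2)
  have hgP : PolyGrowth g := by
    have := pg_combo 1 (-(b^2)) hg0 hg2
    refine ⟨this.choose, this.choose_spec.choose, fun x => ?_⟩
    have h := this.choose_spec.choose_spec x
    simpa [hgdef, sub_eq_add_neg, neg_mul] using h
  -- derivative facts
  have hA : ∀ z : ℝ, HasDerivAt (fun z => f (q + z)) (deriv f (q + z)) z := fun z => by
    simpa [Function.comp_def] using (hd1 (q + z)).hasDerivAt.comp z ((hasDerivAt_id z).const_add q)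
  have hB : ∀ z : ℝ, HasDerivAt (fun z => deriv f (q + z)) (deriv (deriv f) (q + z)) z :=
    fun z => by
      simpa [Function.comp_def] using (hd2 (q + z)).hasDerivAt.comp z ((hasDerivAt_id z).const_add q)
  have hEm : ∀ z : ℝ, HasDerivAt (fun z : ℝ => Real.exp (-z / b))
      (-(1/b) * Real.exp (-z / b)) z := fun z => by
    have h1 : HasDerivAt (fun z : ℝ => -z / b) (-(1/b)) z := by
      simpa [neg_div, Pi.neg_def] using ((hasDerivAt_id z).div_const b).neg
    simpa [mul_comm, Function.comp_def] using (Real.hasDerivAt_exp (-z / b)).comp z h1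
  have hEp : ∀ z : ℝ, HasDerivAt (fun z : ℝ => Real.exp (z / b))
      ((1/b) * Real.exp (z / b)) z := fun z => by
    have h1 : HasDerivAt (fun z : ℝ => z / b) (1/b) z := by
      simpa using (hasDerivAt_id z).div_const b
    simpa [mul_comm, Function.comp_def] using (Real.hasDerivAt_exp (z / b)).comp z h1
  set G : ℝ → ℝ := fun z => -(b * f (q + z) + b ^ 2 * deriv f (q + z)) * Real.exp (-z / b)
    with hGdef
  set H : ℝ → ℝ := fun z => (b * f (q + z) - b ^ 2 * deriv f (q + z)) * Real.exp (z / b)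
    with hHdef
  have hG : ∀ z : ℝ, HasDerivAt G (g (q + z) * Real.exp (-z / b)) z := fun z => by
    have := (((hA z).const_mul b).add ((hB z).const_mul (b ^ 2))).neg.mul (hEm z)
    convert this using 1
    · rfl
    · rfl
    · rfl
    simp only [hgdef, Pi.neg_apply, Pi.add_apply, Pi.sub_apply]
    field_simp
    ring
  have hH : ∀ z : ℝ, HasDerivAt H (g (q + z) * Real.exp (z / b)) z := fun z => by
    have := (((hA z).const_mul b).sub ((hB z).const_mul (b ^ 2))).mul (hEp z)
    convert this using 1
    · rfl
    · rfl
    · rfl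
    simp only [hgdef, Pi.neg_apply, Pi.add_apply, Pi.sub_apply]
    field_simp
    ring
  -- limits
  have hGtop : Tendsto G atTop (𝓝 0) := by
    have h1 := pg_tendsto hcb hg0 q
    have h2 := pg_tendsto hcb hg1 q
    have T := ((h1.const_mul b).add (h2.const_mul (b ^ 2))).neg
    rw [mul_zero, mul_zero, add_zero, neg_zero] at T
    refine T.congr (fun z => ?_)
    have harg : -(1/b * z) = -z / b := by ring
    rw [harg]
    simp only [hGdef]
    ring
  have hHbot : Tendsto H atBot (𝓝 0) := by
    have h1 := pg_tendsto hcb (pg_neg hg0) (-q)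
    have h2 := pg_tendsto hcb (pg_neg hg1) (-q)
    have T := ((h1.const_mul b).sub (h2.const_mul (b ^ 2))).comp tendsto_neg_atBot_atTop
    rw [mul_zero, mul_zero, sub_zero] at T
    refine T.congr (fun z => ?_)
    simp only [Function.comp, hHdef]
    have h3 : -(-q + -z) = q + z := by ring
    have harg : -(1/b * -z) = z / b := by ring
    rw [h3, harg]
    ring
  -- integrability
  have hIntG : IntegrableOn (fun z : ℝ => g (q + z) * Real.exp (-z / b)) (Ici (0:ℝ)) := by
    have := pg_integrableOn hcb hgc hgP q
    refine this.congr_fun (fun z _ => ?_) measurableSet_Ici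
    beta_reduce
    rw [show -(1/b * z) = -z / b by ring]
  have hIntH : IntegrableOn (fun z : ℝ => g (q + z) * Real.exp (z / b)) (Iic (0:ℝ)) := by
    have hk : IntegrableOn (fun w : ℝ => g (-(-q + w)) * Real.exp (-(1/b * w)))
        (Ici (0:ℝ)) := pg_integrableOn hcb (hgc.comp continuous_neg) (pg_neg hgP) (-q)
    have h2 := (MeasurePreserving.integrableOn_comp_preimage
      (Measure.measurePreserving_neg (volume : Measure ℝ))
      (Homeomorph.neg ℝ).measurableEmbedding).2 hk
    have hpre : (Neg.neg : ℝ → ℝ) ⁻¹' Ici (0:ℝ) = Iic 0 := by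
      ext x; simp
    rw [hpre] at h2
    refine h2.congr_fun (fun z _ => ?_) measurableSet_Iic
    simp only [Function.comp]
    rw [show -(-q + -z) = q + z by ring, show -(1/b * -z) = z / b by ring]
  -- FTC on each half line
  have hIoi : ∫ z in Ioi (0:ℝ), g (q + z) * Real.exp (-z / b)
      = b * f q + b ^ 2 * deriv f q := by
    have := integral_Ioi_of_hasDerivAt_of_tendsto' (a := 0) (fun x _ => hG x)
      (hIntG.mono_set Ioi_subset_Ici_self) hGtop
    rw [this]
    simp only [hGdef]
    norm_num
  have hIic : ∫ z in Iic (0:ℝ), g (q + z) * Real.exp (z / b)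
      = b * f q - b ^ 2 * deriv f q := by
    have := integral_Iic_of_hasDerivAt_of_tendsto' (a := 0) (fun x _ => hH x) hIntH hHbot
    rw [this]
    simp only [hHdef]
    norm_num
  -- assemble
  have hpdfIoi : EqOn (fun z : ℝ => (f (q + z) - b ^ 2 * deriv (deriv f) (q + z)) * laplacePDF b z)
      (fun z : ℝ => (1 / (2 * b)) * (g (q + z) * Real.exp (-z / b))) (Ioi 0) := by
    intro z hz
    simp only [laplacePDF, hgdef, abs_of_pos (mem_Ioi.mp hz)]
    ring
  have hpdfIic : EqOn (fun z : ℝ => (f (q + z) - b ^ 2 * deriv (deriv f) (q + z)) * laplacePDF b z)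
      (fun z : ℝ => (1 / (2 * b)) * (g (q + z) * Real.exp (z / b))) (Iic 0) := by
    intro z hz
    simp only [laplacePDF, hgdef, abs_of_nonpos (mem_Iic.mp hz)]
    rw [show -(-z) / b = z / b by ring]
    ring
  have hI2 : IntegrableOn (fun z : ℝ => (f (q + z) - b ^ 2 * deriv (deriv f) (q + z))
      * laplacePDF b z) (Ioi 0) :=
    IntegrableOn.congr_fun
      (((hIntG.mono_set Ioi_subset_Ici_self).const_mul (1 / (2 * b)) :
        IntegrableOn (fun z : ℝ => (1 / (2 * b)) * (g (q + z) * Real.exp (-z / b))) (Ioi 0) volume))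
      (fun z hz => (hpdfIoi hz).symm) measurableSet_Ioi
  have hI1 : IntegrableOn (fun z : ℝ => (f (q + z) - b ^ 2 * deriv (deriv f) (q + z))
      * laplacePDF b z) (Iic 0) :=
    IntegrableOn.congr_fun
      ((hIntH.const_mul (1 / (2 * b)) : IntegrableOn (fun z : ℝ => (1 / (2 * b)) * (g (q + z) * Real.exp (z / b))) (Iic 0) volume))
      (fun z hz => (hpdfIic hz).symm) measurableSet_Iic
  rw [← intervalIntegral.integral_Iic_add_Ioi (b := (0:ℝ)) hI1 hI2,
    setIntegral_congr_fun measurableSet_Iic hpdfIic,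
    setIntegral_congr_fun measurableSet_Ioi hpdfIoi,
    integral_const_mul, integral_const_mul, hIic, hIoi]
  field_simp
  ring
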